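/- Let Θ(y,z) := diag(Jᵀy) + U(z) + U(z)ᵀ for y ∈ ℝ^{n−1}, z ∈ ℝ^{n(n−1)/2}, where J = [I_{n−1}, −1] ∈ ℝ^{(n−1)×n} and U(z) is the strictly upper-triangular matrix built coordinatewise from z. With c := (1/2 + 1/(2n))e_{nn} + Σ_{i<n} e_{ii}/(2n), the set C := {(y,z) : c + Θ(y,z) ⪰ 0} (the reparametrized set of unit-trace PSD matrices) satisfies B(n^{−3/2}/4) ⊆ C ⊆ B(2√n) in the Euclidean norm ‖(y,z)‖ = ‖y‖ + ‖z‖. -/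

import Mathlib

/-- Index type for the strictly-upper-triangular entries of an `n × n` matrix:
there are `n(n−1)/2` of them. -/
abbrev StrictUpperIdx (n : ℕ) := {p : Fin n × Fin n // p.1 < p.2}

/-- `U(z)`: the strictly upper-triangular matrix built coordinatewise from `z`. -/
noncomputable def Umat {n : ℕ} (z : EuclideanSpace ℝ (StrictUpperIdx n)) :
    Matrix (Fin n) (Fin n) ℝ :=
  fun i j => if h : i < j then z ⟨(i, j), h⟩ else 0

/-- `Θ(y, z) = diag(Jᵀ y) + U(z) + U(z)ᵀ`, where `J = [I_{n−1}, −1]`, i.e.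
`(Jᵀ y)_i = y_i` for `i < n − 1` and `(Jᵀ y)_{n−1} = −Σ_k y_k`. -/
noncomputable def ThetaMat {n : ℕ} (y : EuclideanSpace ℝ (Fin (n - 1)))
    (z : EuclideanSpace ℝ (StrictUpperIdx n)) : Matrix (Fin n) (Fin n) ℝ :=
  Matrix.diagonal (fun i : Fin n => if h : (i : ℕ) < n - 1 then y ⟨i, h⟩ else -∑ k, y k)
    + Umat z + (Umat z).transpose

/-- `c = (1/2 + 1/(2n)) e_{nn} + Σ_{i<n} e_{ii}/(2n)`. -/
noncomputable def cMat (n : ℕ) : Matrix (Fin n) (Fin n) ℝ :=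
  Matrix.diagonal (fun i : Fin n =>
    if (i : ℕ) = n - 1 then 1 / 2 + 1 / (2 * (n : ℝ)) else 1 / (2 * (n : ℝ)))

namespace PsdAux

open Finset Matrix

/-- The diagonal of `cMat`. -/
noncomputable def cdiag (n : ℕ) : Fin n → ℝ :=
  fun i => if (i : ℕ) = n - 1 then 1 / 2 + 1 / (2 * (n : ℝ)) else 1 / (2 * (n : ℝ))

/-- The diagonal of `ThetaMat`. -/
noncomputable def dvec {n : ℕ} (y : EuclideanSpace ℝ (Fin (n - 1))) : Fin n → ℝ :=
  fun i => if h : (i : ℕ) < n - 1 then y ⟨i, h⟩ else -∑ k, y k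

lemma Amat_eq {n : ℕ} (y : EuclideanSpace ℝ (Fin (n - 1)))
    (z : EuclideanSpace ℝ (StrictUpperIdx n)) :
    cMat n + ThetaMat y z
      = Matrix.diagonal (fun i => cdiag n i + dvec y i) + (Umat z + (Umat z)ᵀ) := by
  show Matrix.diagonal (cdiag n) + (Matrix.diagonal (dvec y) + Umat z + (Umat z)ᵀ) = _
  rw [← Matrix.diagonal_add]
  abel

lemma enorm_sq {ι : Type*} [Fintype ι] (v : EuclideanSpace ℝ ι) :
    ‖v‖ ^ 2 = ∑ i, v i ^ 2 := by
  rw [EuclideanSpace.norm_eq, Real.sq_sqrt (by positivity)]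
  simp [sq_abs]

lemma coord_abs_le {ι : Type*} [Fintype ι] (v : EuclideanSpace ℝ ι) (i : ι) :
    |v i| ≤ ‖v‖ := by
  have h1 : v i ^ 2 ≤ ‖v‖ ^ 2 := by
    rw [enorm_sq]
    exact Finset.single_le_sum (f := fun j => v j ^ 2) (fun j _ => sq_nonneg _) (mem_univ i)
  calc |v i| = Real.sqrt (v i ^ 2) := (Real.sqrt_sq_eq_abs _).symm
    _ ≤ Real.sqrt (‖v‖ ^ 2) := Real.sqrt_le_sqrt h1
    _ = ‖v‖ := by rw [Real.sqrt_sq (norm_nonneg _)]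

lemma sum_prod_eq_sum_subtype {n : ℕ} (f : Fin n × Fin n → ℝ)
    (hf : ∀ q : Fin n × Fin n, ¬ q.1 < q.2 → f q = 0) :
    ∑ q : Fin n × Fin n, f q = ∑ p : StrictUpperIdx n, f p.1 := by
  classical
  rw [← Finset.sum_filter_add_sum_filter_not Finset.univ (fun q : Fin n × Fin n => q.1 < q.2) f]
  rw [← Finset.sum_subtype_eq_sum_filter, Finset.subtype_univ]
  have h0 : ∑ q ∈ Finset.univ.filter (fun q : Fin n × Fin n => ¬ q.1 < q.2), f q = 0 :=
    Finset.sum_eq_zero fun q hq => hf q (by simpa using (Finset.mem_filter.mp hq).2)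
  rw [h0, add_zero]

lemma quad_diag {n : ℕ} (d : Fin n → ℝ) (x : Fin n → ℝ) :
    x ⬝ᵥ (Matrix.diagonal d *ᵥ x) = ∑ i, d i * x i ^ 2 := by
  simp only [dotProduct, mulVec_diagonal]
  exact Finset.sum_congr rfl fun i _ => by ring

lemma quad_gen {n : ℕ} (M : Matrix (Fin n) (Fin n) ℝ) (x : Fin n → ℝ) :
    x ⬝ᵥ (M *ᵥ x) = ∑ q : Fin n × Fin n, M q.1 q.2 * (x q.1 * x q.2) := by
  rw [Fintype.sum_prod_type]
  simp only [dotProduct, mulVec, dotProduct, Finset.mul_sum]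
  exact Finset.sum_congr rfl fun i _ => Finset.sum_congr rfl fun j _ => by ring

lemma quad_transpose {n : ℕ} (M : Matrix (Fin n) (Fin n) ℝ) (x : Fin n → ℝ) :
    x ⬝ᵥ (Mᵀ *ᵥ x) = x ⬝ᵥ (M *ᵥ x) := by
  rw [quad_gen, quad_gen]
  exact Fintype.sum_equiv (Equiv.prodComm _ _) _ _ fun q => by
    simp [Matrix.transpose_apply, mul_comm]

lemma sum_Umat_sq {n : ℕ} (z : EuclideanSpace ℝ (StrictUpperIdx n)) :
    ∑ q : Fin n × Fin n, (Umat z q.1 q.2) ^ 2 = ‖z‖ ^ 2 := by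
  rw [sum_prod_eq_sum_subtype _ (fun q hq => by simp [Umat, dif_neg hq]), enorm_sq]
  refine Finset.sum_congr rfl fun p _ => ?_
  simp only [Umat, dif_pos p.2]

lemma cross_bound {n : ℕ} (z : EuclideanSpace ℝ (StrictUpperIdx n)) (x : Fin n → ℝ) :
    |∑ q : Fin n × Fin n, Umat z q.1 q.2 * (x q.1 * x q.2)| ≤ ‖z‖ * ∑ i, x i ^ 2 := by
  have hcs := Finset.sum_mul_sq_le_sq_mul_sq Finset.univ
    (fun q : Fin n × Fin n => Umat z q.1 q.2) (fun q => x q.1 * x q.2)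
  have h2 : ∑ q : Fin n × Fin n, (x q.1 * x q.2) ^ 2 = (∑ i, x i ^ 2) ^ 2 := by
    rw [Fintype.sum_prod_type, sq (∑ i, x i ^ 2), Finset.sum_mul_sum]
    exact Finset.sum_congr rfl fun i _ => Finset.sum_congr rfl fun j _ => by ring
  rw [sum_Umat_sq, h2] at hcs
  have hnn : (0:ℝ) ≤ ‖z‖ * ∑ i, x i ^ 2 :=
    mul_nonneg (norm_nonneg _) (Finset.sum_nonneg fun i _ => sq_nonneg _)
  calc |∑ q : Fin n × Fin n, Umat z q.1 q.2 * (x q.1 * x q.2)|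
      = Real.sqrt ((∑ q : Fin n × Fin n, Umat z q.1 q.2 * (x q.1 * x q.2)) ^ 2) :=
        (Real.sqrt_sq_eq_abs _).symm
    _ ≤ Real.sqrt (‖z‖ ^ 2 * (∑ i, x i ^ 2) ^ 2) := Real.sqrt_le_sqrt hcs
    _ = ‖z‖ * ∑ i, x i ^ 2 := by rw [← mul_pow, Real.sqrt_sq hnn]

lemma abs_sum_le {n : ℕ} (hn : 1 ≤ n) (y : EuclideanSpace ℝ (Fin (n - 1))) :
    |∑ k, y k| ≤ Real.sqrt n * ‖y‖ := by
  have hcs : (∑ k, y k) ^ 2 ≤ (n - 1 : ℕ) * ∑ k, y k ^ 2 := by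
    simpa using sq_sum_le_card_mul_sum_sq (s := Finset.univ) (f := fun k => y k)
  have h2 : (∑ k, y k) ^ 2 ≤ (n : ℝ) * ‖y‖ ^ 2 := by
    rw [enorm_sq]
    refine hcs.trans (mul_le_mul_of_nonneg_right ?_ (Finset.sum_nonneg fun i _ => sq_nonneg _))
    exact_mod_cast Nat.cast_le.mpr (Nat.sub_le n 1)
  calc |∑ k, y k| = Real.sqrt ((∑ k, y k) ^ 2) := (Real.sqrt_sq_eq_abs _).symm
    _ ≤ Real.sqrt ((n:ℝ) * ‖y‖ ^ 2) := Real.sqrt_le_sqrt h2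
    _ = Real.sqrt n * ‖y‖ := by
        rw [Real.sqrt_mul (by positivity), Real.sqrt_sq (norm_nonneg _)]

lemma one_le_sqrt {n : ℕ} (hn : 1 ≤ n) : (1:ℝ) ≤ Real.sqrt n := by
  rw [show (1:ℝ) = Real.sqrt 1 by simp]
  exact Real.sqrt_le_sqrt (by exact_mod_cast hn)

lemma dvec_abs_le {n : ℕ} (hn : 1 ≤ n) (y : EuclideanSpace ℝ (Fin (n - 1))) (i : Fin n) :
    |dvec y i| ≤ Real.sqrt n * ‖y‖ := by
  have h1 : (1:ℝ) ≤ Real.sqrt n := one_le_sqrt hn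
  unfold dvec
  split
  · exact (coord_abs_le y _).trans (by nlinarith [norm_nonneg y])
  · rw [abs_neg]; exact abs_sum_le hn y

lemma herm {n : ℕ} (y : EuclideanSpace ℝ (Fin (n - 1)))
    (z : EuclideanSpace ℝ (StrictUpperIdx n)) :
    (cMat n + ThetaMat y z).IsHermitian := by
  have key : ∀ i j, (cMat n + ThetaMat y z) j i = (cMat n + ThetaMat y z) i j := by
    intro i j
    rcases eq_or_ne i j with rfl | h
    · rfl
    · simp only [cMat, ThetaMat, Matrix.add_apply, Matrix.diagonal_apply_ne _ h,
        Matrix.diagonal_apply_ne _ (Ne.symm h), Matrix.transpose_apply]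
      ring
  ext i j
  rw [Matrix.conjTranspose_apply, star_trivial]
  exact key i j

lemma cdiag_ge {n : ℕ} (i : Fin n) : 1 / (2 * (n:ℝ)) ≤ cdiag n i := by
  unfold cdiag
  split
  · linarith
  · exact le_rfl

lemma Amat_diag {n : ℕ} (y : EuclideanSpace ℝ (Fin (n - 1)))
    (z : EuclideanSpace ℝ (StrictUpperIdx n)) (i : Fin n) :
    (cMat n + ThetaMat y z) i i = cdiag n i + dvec y i := by
  rw [Amat_eq]
  simp [Umat, Matrix.add_apply, Matrix.transpose_apply, lt_irrefl]

lemma Amat_off {n : ℕ} (y : EuclideanSpace ℝ (Fin (n - 1)))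
    (z : EuclideanSpace ℝ (StrictUpperIdx n)) (p : StrictUpperIdx n) :
    (cMat n + ThetaMat y z) p.1.1 p.1.2 = z p := by
  have h := p.2
  have hne : p.1.1 ≠ p.1.2 := ne_of_lt h
  rw [Amat_eq]
  simp only [Matrix.add_apply, Matrix.diagonal_apply_ne _ hne, Matrix.transpose_apply,
    Umat, dif_pos h, dif_neg (asymm h)]
  simp

lemma psd_entry_sq_le {n : ℕ} {A : Matrix (Fin n) (Fin n) ℝ} (hA : A.PosSemidef)
    (i j : Fin n) : A i j ^ 2 ≤ A i i * A j j := by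
  have hsym : A j i = A i j := by
    have h := congrFun (congrFun hA.1 i) j
    simpa using h
  have key : ∀ t : ℝ, 0 ≤ A i i * (t * t) + (2 * A i j) * t + A j j := by
    intro t
    have h := hA.dotProduct_mulVec_nonneg (t • (Pi.single i 1 : Fin n → ℝ) + (Pi.single j 1 : Fin n → ℝ))
    rw [star_trivial] at h
    have hx : ∀ w : Fin n → ℝ, (t • (Pi.single i 1 : Fin n → ℝ) + (Pi.single j 1 : Fin n → ℝ)) ⬝ᵥ w
        = t * w i + w j := by
      intro w
      simp [add_dotProduct, smul_dotProduct, single_dotProduct]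
    have hv : A *ᵥ (t • (Pi.single i 1 : Fin n → ℝ) + (Pi.single j 1 : Fin n → ℝ)) = fun k => t * A k i + A k j := by
      funext k
      simp [Matrix.mulVec_add, Matrix.mulVec_smul, Matrix.mulVec_single]
    rw [hv, hx] at h
    calc (0:ℝ) ≤ t * (t * A i i + A i j) + (t * A j i + A j j) := h
      _ = A i i * (t * t) + (2 * A i j) * t + A j j := by rw [hsym]; ring
  have hd := discrim_le_zero key
  rw [discrim] at hd
  nlinarith [hd]

lemma psd_diag_nonneg {n : ℕ} {A : Matrix (Fin n) (Fin n) ℝ} (hA : A.PosSemidef)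
    (i : Fin n) : 0 ≤ A i i := by
  have h := hA.dotProduct_mulVec_nonneg ((Pi.single i 1 : Fin n → ℝ))
  rw [star_trivial] at h
  simpa [Matrix.mulVec_single, single_dotProduct] using h

lemma sum_cdiag {n : ℕ} (hn : 2 ≤ n) : ∑ i, cdiag n i = 1 := by
  have hn0 : (0:ℝ) < n := by exact_mod_cast Nat.lt_of_lt_of_le (by norm_num) hn
  have hterm : ∀ i : Fin n, cdiag n i
      = 1 / (2 * (n:ℝ)) + (if i = (⟨n - 1, by omega⟩ : Fin n) then (1:ℝ)/2 else 0) := by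
    intro i
    unfold cdiag
    by_cases h : (i:ℕ) = n - 1
    · rw [if_pos h, if_pos (Fin.ext h)]; ring
    · rw [if_neg h, if_neg (fun hh => h (by rw [hh]))]; ring
  rw [Finset.sum_congr rfl fun i _ => hterm i, Finset.sum_add_distrib,
    Finset.sum_ite_eq' Finset.univ]
  simp only [Finset.mem_univ, if_true, Finset.sum_const, Finset.card_univ, Fintype.card_fin,
    nsmul_eq_mul]
  field_simp
  ring

lemma sum_dvec {n : ℕ} (hn : 2 ≤ n) (y : EuclideanSpace ℝ (Fin (n - 1))) :
    ∑ i, dvec y i = 0 := by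
  obtain ⟨m, rfl⟩ : ∃ m, n = m + 1 := ⟨n - 1, by omega⟩
  rw [Fin.sum_univ_castSucc]
  have hlast : dvec y (Fin.last m) = -∑ k, y k := by
    unfold dvec
    rw [dif_neg (by simp)]
  have hcs : ∀ i : Fin m, dvec y (Fin.castSucc i) = y i := by
    intro i
    unfold dvec
    exact dif_pos i.isLt
  rw [hlast, Finset.sum_congr rfl fun i _ => hcs i]
  exact add_neg_cancel _

end PsdAux

open PsdAux Finset Matrix in
/-- The reparametrized set of unit-trace PSD matrices,
`C = {(y, z) : c + Θ(y, z) ⪰ 0}`, satisfies `B(n^{−3/2}/4) ⊆ C ⊆ B(2√n)` for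
the norm `‖(y, z)‖ = ‖y‖ + ‖z‖`. -/
theorem psd_unit_trace_reparam_ball_sandwich (n : ℕ) (hn : 2 ≤ n) :
    (∀ (y : EuclideanSpace ℝ (Fin (n - 1))) (z : EuclideanSpace ℝ (StrictUpperIdx n)),
        ‖y‖ + ‖z‖ ≤ 1 / (4 * (n : ℝ) * Real.sqrt n) →
          (cMat n + ThetaMat y z).PosSemidef) ∧
      ∀ (y : EuclideanSpace ℝ (Fin (n - 1))) (z : EuclideanSpace ℝ (StrictUpperIdx n)),
        (cMat n + ThetaMat y z).PosSemidef → ‖y‖ + ‖z‖ ≤ 2 * Real.sqrt n := by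
  have hn0 : (0:ℝ) < n := by exact_mod_cast Nat.lt_of_lt_of_le (by norm_num) hn
  have hs1 : (1:ℝ) ≤ Real.sqrt n := one_le_sqrt (by omega)
  have hss : Real.sqrt n * Real.sqrt n = n := Real.mul_self_sqrt hn0.le
  constructor
  · -- small ball is inside
    intro y z hyz
    have hy0 : (0:ℝ) ≤ ‖y‖ := norm_nonneg _
    have hz0 : (0:ℝ) ≤ ‖z‖ := norm_nonneg _
    have key : Real.sqrt n * ‖y‖ + 2 * ‖z‖ ≤ 1 / (2 * (n:ℝ)) := by
      have hp : (0:ℝ) < 4 * n * Real.sqrt n := by positivity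
      have h1 : (‖y‖ + ‖z‖) * (4 * n * Real.sqrt n) ≤ 1 := (le_div_iff₀ hp).mp hyz
      rw [le_div_iff₀ (by positivity : (0:ℝ) < 2 * (n:ℝ))]
      nlinarith [mul_nonneg hz0 (sub_nonneg.mpr hs1), mul_nonneg (mul_nonneg hn0.le hy0)
        (Real.sqrt_nonneg n)]
    refine Matrix.PosSemidef.of_dotProduct_mulVec_nonneg (herm y z) fun x => ?_
    rw [star_trivial]
    rw [Amat_eq, Matrix.add_mulVec, dotProduct_add, quad_diag, Matrix.add_mulVec,
      dotProduct_add, quad_transpose, quad_gen]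
    set S := ∑ q : Fin n × Fin n, Umat z q.1 q.2 * (x q.1 * x q.2) with hS
    set X := ∑ i, x i ^ 2 with hXdef
    have hX0 : (0:ℝ) ≤ X := Finset.sum_nonneg fun i _ => sq_nonneg _
    have hsplit : ∑ i, (cdiag n i + dvec y i) * x i ^ 2
        = ∑ i, cdiag n i * x i ^ 2 + ∑ i, dvec y i * x i ^ 2 := by
      rw [← Finset.sum_add_distrib]
      exact Finset.sum_congr rfl fun i _ => by ring
    have h1 : 1 / (2 * (n:ℝ)) * X ≤ ∑ i, cdiag n i * x i ^ 2 := by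
      rw [hXdef, Finset.mul_sum]
      exact Finset.sum_le_sum fun i _ =>
        mul_le_mul_of_nonneg_right (cdiag_ge i) (sq_nonneg _)
    have h2 : -(Real.sqrt n * ‖y‖) * X ≤ ∑ i, dvec y i * x i ^ 2 := by
      rw [hXdef, Finset.mul_sum]
      refine Finset.sum_le_sum fun i _ => ?_
      refine mul_le_mul_of_nonneg_right ?_ (sq_nonneg _)
      have := dvec_abs_le (by omega) y i
      have := neg_abs_le (dvec y i)
      linarith
    have h3 : |S| ≤ ‖z‖ * X := cross_bound z x
    have h4 : -(‖z‖ * X) ≤ S := by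
      have := neg_abs_le S
      linarith [h3]
    have hfac : 0 ≤ (1 / (2 * (n:ℝ)) - Real.sqrt n * ‖y‖ - 2 * ‖z‖) * X :=
      mul_nonneg (by linarith) hX0
    rw [hsplit]
    nlinarith [h1, h2, h4, hfac]
  · -- the set is inside the big ball
    intro y z hA
    set A := cMat n + ThetaMat y z with hAdef
    have hdnn : ∀ i, 0 ≤ A i i := psd_diag_nonneg hA
    have htr : ∑ i, A i i = 1 := by
      rw [Finset.sum_congr rfl fun i _ => Amat_diag y z i, Finset.sum_add_distrib,
        sum_cdiag hn, sum_dvec hn y]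
      ring
    have hdle : ∀ i, A i i ≤ 1 := by
      intro i
      calc A i i ≤ ∑ j, A j j := Finset.single_le_sum (fun j _ => hdnn j) (mem_univ i)
        _ = 1 := htr
    -- bound on y
    have hyc : ∀ i : Fin (n-1), |y i| ≤ 1 := by
      intro i
      have hlt : (i : ℕ) < n - 1 := i.isLt
      set ι : Fin n := ⟨i, by omega⟩ with hι
      have hd : A ι ι = 1 / (2 * (n:ℝ)) + y i := by
        show (cMat n + ThetaMat y z) ι ι = _
        rw [Amat_diag y z ι]
        unfold cdiag dvec
        rw [if_neg (show ¬ ((i:ℕ) = n - 1) by omega), dif_pos hlt]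
      have h0 := hdnn ι
      have h1 := hdle ι
      rw [hd] at h0 h1
      have hrec : 0 < 1 / (2 * (n:ℝ)) := by positivity
      have hn2 : (2:ℝ) ≤ (n:ℝ) := by exact_mod_cast hn
      have hrec1 : 1 / (2 * (n:ℝ)) ≤ 1 := by
        rw [div_le_one (by positivity)]
        linarith
      rw [abs_le]
      constructor <;> linarith
    have hy : ‖y‖ ≤ Real.sqrt n := by
      rw [show Real.sqrt n = Real.sqrt n by rfl]
      rw [← Real.sqrt_sq (norm_nonneg y)]
      apply Real.sqrt_le_sqrt
      rw [enorm_sq]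
      calc ∑ i, y i ^ 2 ≤ ∑ _i : Fin (n-1), (1:ℝ) := by
            refine Finset.sum_le_sum fun i _ => ?_
            nlinarith [hyc i, sq_abs (y i), abs_nonneg (y i)]
        _ = (n - 1 : ℕ) := by simp
        _ ≤ (n:ℝ) := by exact_mod_cast Nat.cast_le.mpr (Nat.sub_le n 1)
    -- bound on z
    have hz : ‖z‖ ≤ 1 := by
      have hz2 : ‖z‖ ^ 2 ≤ 1 := by
        rw [enorm_sq]
        have hstep : ∀ p : StrictUpperIdx n, z p ^ 2 ≤ A p.1.1 p.1.1 * A p.1.2 p.1.2 := by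
          intro p
          rw [← Amat_off y z p]
          exact psd_entry_sq_le hA _ _
        calc ∑ p : StrictUpperIdx n, z p ^ 2
            ≤ ∑ p : StrictUpperIdx n, A p.1.1 p.1.1 * A p.1.2 p.1.2 :=
              Finset.sum_le_sum fun p _ => hstep p
          _ = ∑ q ∈ Finset.univ.filter (fun q : Fin n × Fin n => q.1 < q.2),
                A q.1 q.1 * A q.2 q.2 := by
              rw [← Finset.sum_subtype_eq_sum_filter, Finset.subtype_univ]
          _ ≤ ∑ q : Fin n × Fin n, A q.1 q.1 * A q.2 q.2 :=
              Finset.sum_le_sum_of_subset_of_nonneg (Finset.filter_subset _ _)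
                (fun q _ _ => mul_nonneg (hdnn _) (hdnn _))
          _ = (∑ i, A i i) * (∑ j, A j j) := by
              rw [Fintype.sum_prod_type, Finset.sum_mul_sum]
          _ = 1 := by rw [htr]; ring
      calc ‖z‖ = Real.sqrt (‖z‖ ^ 2) := (Real.sqrt_sq (norm_nonneg z)).symm
        _ ≤ Real.sqrt 1 := Real.sqrt_le_sqrt hz2
        _ = 1 := Real.sqrt_one
    linarith
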